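/- Let S ⊆ [0,∞) with 0 ∈ S, and let H be a topological space. Let C(H,S) be the set of continuous functions from H to S (with the Euclidean topology on S). Define 𝒰(f,g) = min(1, sup_{x∈H} u_S(f(x), g(x))), where u_S(a,b) = max(a,b) for a ≠ b and u_S(a,a)=0. Then 𝒰 is an ultrametric on C(H,S) and the space (C(H,S), 𝒰) is complete. -/

import Mathlib

/-- The Delhommé–Laflamme–Pouzet–Sauer ultrametric on `[0,∞)`:
`uS a b = max a b` if `a ≠ b` and `0` otherwise. -/
noncomputable def uS (a b : ℝ) : ℝ := if a = b then 0 else max a b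

/-- Continuous `S`-valued functions on `H`. -/
def CS (H : Type*) [TopologicalSpace H] (S : Set ℝ) : Type _ :=
  {f : H → ℝ // Continuous f ∧ ∀ x, f x ∈ S}

/-- The truncated sup-ultrametric `𝒰(f,g) = min (1, sup_x uS (f x) (g x))`, expressed
as an infimum so that it is also meaningful when the supremum is infinite (in which
case it equals `1`). -/
noncomputable def Udist {H : Type*} [TopologicalSpace H] {S : Set ℝ}
    (f g : CS H S) : ℝ :=
  sInf {ε : ℝ | 1 ≤ ε ∨ (0 ≤ ε ∧ ∀ x, uS (f.1 x) (g.1 x) ≤ ε)}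

lemma uS_self (a : ℝ) : uS a a = 0 := if_pos rfl

lemma uS_comm (a b : ℝ) : uS a b = uS b a := by
  unfold uS
  by_cases h : a = b
  · simp [h]
  · rw [if_neg h, if_neg (Ne.symm h), max_comm]

lemma uS_nonneg {a b : ℝ} (ha : 0 ≤ a) (hb : 0 ≤ b) : 0 ≤ uS a b := by
  unfold uS; split
  · exact le_refl 0
  · exact le_max_of_le_left ha

lemma uS_ultra {a b c : ℝ} (ha : 0 ≤ a) (hb : 0 ≤ b) :
    uS a b ≤ max (uS a c) (uS c b) := by
  unfold uS
  by_cases hab : a = b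
  · rw [if_pos hab]
    rcases eq_or_ne a c with h | h
    · rcases eq_or_ne c b with h' | h'
      · simp [h, h']
      · rw [if_neg h']
        exact le_max_of_le_right (le_max_of_le_right hb)
    · rw [if_neg h]
      exact le_max_of_le_left (le_max_of_le_left ha)
  · rw [if_neg hab]
    rcases eq_or_ne a c with h | h
    · have h' : c ≠ b := h ▸ hab
      rw [if_neg h', ← h]
      exact le_max_right _ _
    · rcases eq_or_ne c b with h' | h'
      · rw [if_neg h, h']
        exact le_max_left _ _
      · rw [if_neg h, if_neg h']
        exact max_le (le_max_of_le_left (le_max_left _ _))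
          (le_max_of_le_right (le_max_right _ _))

lemma abs_sub_le_uS {a b : ℝ} (ha : 0 ≤ a) (hb : 0 ≤ b) : |a - b| ≤ uS a b := by
  unfold uS
  by_cases h : a = b
  · simp [h]
  · rw [if_neg h, abs_sub_le_iff]
    constructor
    · linarith [le_max_left a b]
    · linarith [le_max_right a b]

lemma uS_lt_cases {a b ε : ℝ} (h : uS a b < ε) : a = b ∨ (a < ε ∧ b < ε) := by
  by_cases hab : a = b
  · exact Or.inl hab
  · rw [uS, if_neg hab, max_lt_iff] at h
    exact Or.inr h

section
variable {H : Type*} [TopologicalSpace H] {S : Set ℝ}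

lemma Uset_nonempty (f g : CS H S) :
    Set.Nonempty {ε : ℝ | 1 ≤ ε ∨ (0 ≤ ε ∧ ∀ x, uS (f.1 x) (g.1 x) ≤ ε)} :=
  ⟨1, Or.inl le_rfl⟩

lemma Uset_bdd (f g : CS H S) :
    BddBelow {ε : ℝ | 1 ≤ ε ∨ (0 ≤ ε ∧ ∀ x, uS (f.1 x) (g.1 x) ≤ ε)} := by
  refine ⟨0, fun ε hε => ?_⟩
  rcases hε with h | ⟨h, _⟩
  · linarith
  · exact h

lemma Udist_nonneg (f g : CS H S) : 0 ≤ Udist f g := by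
  refine le_csInf (Uset_nonempty f g) (fun ε hε => ?_)
  rcases hε with h | ⟨h, _⟩
  · linarith
  · exact h

lemma Udist_le_one (f g : CS H S) : Udist f g ≤ 1 :=
  csInf_le (Uset_bdd f g) (Or.inl le_rfl)

lemma Udist_le_of {f g : CS H S} {ε : ℝ} (hε : 0 ≤ ε)
    (h : ∀ x, uS (f.1 x) (g.1 x) ≤ ε) : Udist f g ≤ ε :=
  csInf_le (Uset_bdd f g) (Or.inr ⟨hε, h⟩)

lemma Udist_lt_imp {f g : CS H S} {ε : ℝ} (hε : ε ≤ 1)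
    (h : Udist f g < ε) : ∀ x, uS (f.1 x) (g.1 x) < ε := by
  obtain ⟨δ, hδ, hδε⟩ := exists_lt_of_csInf_lt (Uset_nonempty f g) h
  rcases hδ with h1 | ⟨_, hall⟩
  · linarith
  · exact fun x => lt_of_le_of_lt (hall x) hδε

end

/-- `(C(H,S), 𝒰)` is a complete ultrametric space. -/
theorem stmt18 (S : Set ℝ) (hS : S ⊆ Set.Ici 0) (h0 : (0:ℝ) ∈ S)
    (H : Type*) [TopologicalSpace H] :
    (∀ f g : CS H S, 0 ≤ Udist f g) ∧
    (∀ f g : CS H S, Udist f g = 0 ↔ f = g) ∧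
    (∀ f g : CS H S, Udist f g = Udist g f) ∧
    (∀ f g h : CS H S, Udist f g ≤ max (Udist f h) (Udist h g)) ∧
    (∀ u : ℕ → CS H S,
      (∀ ε > (0:ℝ), ∃ N, ∀ m ≥ N, ∀ n ≥ N, Udist (u m) (u n) < ε) →
      ∃ f : CS H S, ∀ ε > (0:ℝ), ∃ N, ∀ n ≥ N, Udist (u n) f < ε) := by
  have hmem : ∀ (f : CS H S) (x : H), 0 ≤ f.1 x := fun f x => hS (f.2.2 x)
  refine ⟨Udist_nonneg, ?_, ?_, ?_, ?_⟩
  · -- identity of indiscernibles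
    intro f g
    constructor
    · intro h
      apply Subtype.ext
      funext x
      have key : ∀ ε : ℝ, 0 < ε → ε ≤ 1 → uS (f.1 x) (g.1 x) < ε := by
        intro ε hε hε1
        exact Udist_lt_imp hε1 (h ▸ hε) x
      have h2 : uS (f.1 x) (g.1 x) ≤ 0 := by
        by_contra hc
        push_neg at hc
        have := key (min (uS (f.1 x) (g.1 x)) 1) (lt_min hc one_pos)
          (min_le_right _ _)
        have := min_le_left (uS (f.1 x) (g.1 x)) 1
        linarith
      have h3 := uS_nonneg (hmem f x) (hmem g x)
      have h4 : uS (f.1 x) (g.1 x) = 0 := le_antisymm h2 h3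
      by_contra hne
      rw [uS, if_neg hne] at h4
      have := hmem f x
      have := hmem g x
      have := le_max_left (f.1 x) (g.1 x)
      have := le_max_right (f.1 x) (g.1 x)
      apply hne
      linarith [max_eq_iff.mp h4]
    · rintro rfl
      refine le_antisymm (Udist_le_of le_rfl fun x => ?_) (Udist_nonneg f f)
      rw [uS_self]
  · intro f g
    unfold Udist
    congr 1
    ext ε
    simp only [Set.mem_setOf_eq]
    constructor
    · rintro (h | ⟨h1, h2⟩)
      · exact Or.inl h
      · exact Or.inr ⟨h1, fun x => (uS_comm (g.1 x) (f.1 x)) ▸ h2 x⟩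
    · rintro (h | ⟨h1, h2⟩)
      · exact Or.inl h
      · exact Or.inr ⟨h1, fun x => (uS_comm (f.1 x) (g.1 x)) ▸ h2 x⟩
  · -- ultrametric inequality
    intro f g h
    set M := max (Udist f h) (Udist h g) with hM
    rcases le_or_gt 1 M with h1 | h1
    · exact le_trans (Udist_le_one f g) h1
    · apply le_of_forall_gt_imp_ge_of_dense
      intro ε hε
      rcases le_or_gt 1 ε with he | he
      · exact le_trans (Udist_le_one f g) he
      · have hfh : ∀ x, uS (f.1 x) (h.1 x) < ε :=
          Udist_lt_imp he.le (lt_of_le_of_lt (le_max_left _ _) hε)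
        have hhg : ∀ x, uS (h.1 x) (g.1 x) < ε :=
          Udist_lt_imp he.le (lt_of_le_of_lt (le_max_right _ _) hε)
        refine Udist_le_of (le_trans (Udist_nonneg f h)
          (le_trans (le_max_left _ _) hε.le)) fun x => ?_
        exact le_trans (uS_ultra (hmem f x) (hmem g x))
          (max_le (hfh x).le (hhg x).le)
  · -- completeness
    intro u hu
    -- pointwise Cauchy
    have hptC : ∀ x : H, CauchySeq (fun n => (u n).1 x) := by
      intro x
      rw [Metric.cauchySeq_iff]
      intro ε hε
      set ε' := min ε 1 / 2 with hε'
      have hε'pos : 0 < ε' := by positivity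
      have hε'1 : ε' ≤ 1 := by
        have := min_le_right ε 1; simp only [hε']; linarith
      obtain ⟨N, hN⟩ := hu ε' hε'pos
      refine ⟨N, fun m hm n hn => ?_⟩
      have h1 := Udist_lt_imp hε'1 (hN m hm n hn) x
      have h2 := abs_sub_le_uS (hmem (u m) x) (hmem (u n) x)
      have := min_le_left ε 1
      calc dist ((u m).1 x) ((u n).1 x) = |(u m).1 x - (u n).1 x| := rfl
        _ ≤ uS ((u m).1 x) ((u n).1 x) := h2
        _ < ε' := h1
        _ ≤ ε := by simp only [hε']; linarith
    have hEx : ∀ x : H, ∃ l : ℝ, Filter.Tendsto (fun n => (u n).1 x)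
        Filter.atTop (nhds l) := fun x => cauchySeq_tendsto_of_complete (hptC x)
    choose f hf using hEx
    -- the key uniform estimate
    have hunif : ∀ ε : ℝ, 0 < ε → ε < 1 → ∃ N, ∀ n ≥ N, ∀ x,
        uS ((u n).1 x) (f x) ≤ ε := by
      intro ε hε hε1
      obtain ⟨N, hN⟩ := hu ε hε
      refine ⟨N, fun n hn x => ?_⟩
      have hlt : ∀ m ≥ N, ∀ k ≥ N, uS ((u m).1 x) ((u k).1 x) < ε :=
        fun m hm k hk => Udist_lt_imp hε1.le (hN m hm k hk) x
      by_cases heq : ∃ m ≥ N, (u m).1 x = f x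
      · obtain ⟨m, hm, hmx⟩ := heq
        rw [← hmx]
        exact (hlt n hn m hm).le
      · push_neg at heq
        -- not eventually constant: two distinct values exist
        have hdist : ∃ m ≥ N, (u m).1 x ≠ (u N).1 x := by
          by_contra hc
          push_neg at hc
          have : Filter.Tendsto (fun m => (u m).1 x) Filter.atTop
              (nhds ((u N).1 x)) := by
            apply Filter.Tendsto.congr' _ tendsto_const_nhds
            filter_upwards [Filter.eventually_ge_atTop N] with m hm
            exact (hc m hm).symm
          exact heq N le_rfl (tendsto_nhds_unique (hf x) this).symm
        obtain ⟨m, hm, hmN⟩ := hdist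
        have hsmall : ∀ k ≥ N, (u k).1 x < ε := by
          intro k hk
          by_cases hkm : (u k).1 x = (u m).1 x
          · have : (u k).1 x ≠ (u N).1 x := hkm ▸ hmN
            rcases uS_lt_cases (hlt k hk N le_rfl) with h | h
            · exact absurd h this
            · exact h.1
          · rcases uS_lt_cases (hlt k hk m hm) with h | h
            · exact absurd h hkm
            · exact h.1
        have hfx : f x ≤ ε := by
          apply le_of_tendsto (hf x)
          filter_upwards [Filter.eventually_ge_atTop N] with k hk
          exact (hsmall k hk).le
        rw [uS]
        split
        · exact hε.le
        · exact max_le (hsmall n hn).le hfx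
    -- f x ∈ S
    have hfS : ∀ x, f x ∈ S := by
      intro x
      by_cases hxS : f x ∈ S
      · exact hxS
      · have h1 : ∀ ε : ℝ, 0 < ε → ε < 1 → f x ≤ ε := by
          intro ε hε hε1
          obtain ⟨N, hN⟩ := hu ε hε
          have hlt : ∀ m ≥ N, ∀ k ≥ N, uS ((u m).1 x) ((u k).1 x) < ε :=
            fun m hm k hk => Udist_lt_imp hε1.le (hN m hm k hk) x
          by_cases hconst : ∀ m ≥ N, (u m).1 x = (u N).1 x
          · exfalso
            have : Filter.Tendsto (fun m => (u m).1 x) Filter.atTop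
                (nhds ((u N).1 x)) := by
              apply Filter.Tendsto.congr' _ tendsto_const_nhds
              filter_upwards [Filter.eventually_ge_atTop N] with m hm
              exact (hconst m hm).symm
            exact hxS ((tendsto_nhds_unique (hf x) this) ▸ (u N).2.2 x)
          · push_neg at hconst
            obtain ⟨m, hm, hmN⟩ := hconst
            have hsmall : ∀ k ≥ N, (u k).1 x < ε := by
              intro k hk
              by_cases hkm : (u k).1 x = (u m).1 x
              · have : (u k).1 x ≠ (u N).1 x := hkm ▸ hmN
                rcases uS_lt_cases (hlt k hk N le_rfl) with h | h
                · exact absurd h this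
                · exact h.1
              · rcases uS_lt_cases (hlt k hk m hm) with h | h
                · exact absurd h hkm
                · exact h.1
            apply le_of_tendsto (hf x)
            filter_upwards [Filter.eventually_ge_atTop N] with k hk
            exact (hsmall k hk).le
        have h2 : f x ≤ 0 := by
          by_contra hc
          push_neg at hc
          have := h1 (min (f x) 1 / 2) (by positivity)
            (by have := min_le_right (f x) 1; linarith)
          have := min_le_left (f x) 1
          linarith
        have h3 : 0 ≤ f x := by
          apply ge_of_tendsto (hf x)
          filter_upwards with k using hmem (u k) x
        have : f x = 0 := le_antisymm h2 h3
        rw [this]; exact h0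
    -- continuity of f via uniform convergence
    have htu : TendstoUniformly (fun n x => (u n).1 x) f Filter.atTop := by
      rw [Metric.tendstoUniformly_iff]
      intro ε hε
      set ε' := min ε 1 / 2 with hε'
      have hε'pos : 0 < ε' := by positivity
      have hε'1 : ε' < 1 := by
        have := min_le_right ε 1; simp only [hε']; linarith
      obtain ⟨N, hN⟩ := hunif ε' hε'pos hε'1
      filter_upwards [Filter.eventually_ge_atTop N] with n hn x
      have h1 := hN n hn x
      have h2 : |(u n).1 x - f x| ≤ uS ((u n).1 x) (f x) := by
        apply abs_sub_le_uS (hmem (u n) x)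
        apply ge_of_tendsto (hf x)
        filter_upwards with k using hmem (u k) x
      have := min_le_left ε 1
      calc dist (f x) ((u n).1 x) = |(u n).1 x - f x| := by
            rw [Real.dist_eq, abs_sub_comm]
        _ ≤ ε' := le_trans h2 h1
        _ < ε := by simp only [hε']; linarith
    have hfc : Continuous f :=
      htu.continuous (Filter.Eventually.of_forall fun n => (u n).2.1).frequently
    refine ⟨⟨f, hfc, hfS⟩, ?_⟩
    intro ε hε
    set ε' := min ε 1 / 2 with hε'
    have hε'pos : 0 < ε' := by positivity
    have hε'1 : ε' < 1 := by
      have := min_le_right ε 1; simp only [hε']; linarith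
    obtain ⟨N, hN⟩ := hunif ε' hε'pos hε'1
    refine ⟨N, fun n hn => ?_⟩
    have := min_le_left ε 1
    calc Udist (u n) (⟨f, hfc, hfS⟩ : CS H S) ≤ ε' := Udist_le_of (g := ⟨f, hfc, hfS⟩) hε'pos.le (hN n hn)
      _ < ε := by simp only [hε']; linarith
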